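/- Let g ∈ ℂ^N have nonzero entries, M = [diag(Re g) diag(Im g)], and M† = Mᵀ(M Mᵀ)^{-1}. Viewing the map ℝ^{2N} → ℂ^N given by [a; b] ↦ a + i·b, the composition [I iI] M† equals diag(conj(g))^{-1}, i.e., ([I iI] M† d)_r = d_r / conj(g_r) for all d ∈ ℝ^N. -/

import Mathlib

theorem complexified_pseudoinverse (N : ℕ) (g : Fin N → ℂ) (hg : ∀ r, g r ≠ 0)
    (d : Fin N → ℝ) :
    let M : Matrix (Fin N) (Fin N ⊕ Fin N) ℝ :=
      Matrix.fromCols (Matrix.diagonal fun r => (g r).re)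
        (Matrix.diagonal fun r => (g r).im)
    let x : Fin N ⊕ Fin N → ℝ := (M.transpose * (M * M.transpose)⁻¹).mulVec d
    ∀ r, (x (Sum.inl r) : ℂ) + Complex.I * (x (Sum.inr r) : ℂ) =
      (d r : ℂ) / (starRingEnd ℂ) (g r) := by
  intro M x r
  have hns : ∀ r, Complex.normSq (g r) ≠ 0 := fun r =>
    fun h => hg r (Complex.normSq_eq_zero.mp h)
  have hMT : M.transpose = Matrix.fromRows (Matrix.diagonal fun r => (g r).re)
      (Matrix.diagonal fun r => (g r).im) := by
    simp [M, Matrix.transpose_fromCols, Matrix.diagonal_transpose]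
  have hMMT : M * M.transpose = Matrix.diagonal (fun r => Complex.normSq (g r)) := by
    rw [hMT]
    simp only [M, Matrix.fromCols_mul_fromRows, Matrix.diagonal_mul_diagonal]
    ext i j
    by_cases h : i = j <;> simp [Matrix.diagonal_apply, h, Complex.normSq_apply]
  have hinv : (M * M.transpose)⁻¹ =
      Matrix.diagonal (fun r => (Complex.normSq (g r))⁻¹) := by
    rw [hMMT]
    apply Matrix.inv_eq_right_inv
    rw [Matrix.diagonal_mul_diagonal]
    convert Matrix.diagonal_one
    exact mul_inv_cancel₀ (hns _)
  have hx : ∀ s, x s = Sum.elim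
      (fun r => (g r).re * (Complex.normSq (g r))⁻¹ * d r)
      (fun r => (g r).im * (Complex.normSq (g r))⁻¹ * d r) s := by
    intro s
    simp only [x]
    rw [hinv, hMT]
    simp only [Matrix.fromRows_mul, Matrix.diagonal_mul_diagonal, Matrix.fromRows_mulVec]
    cases s <;> simp [Matrix.mulVec_diagonal]
  rw [hx, hx]
  simp only [Sum.elim_inl, Sum.elim_inr]
  rw [Complex.ext_iff]
  have := hns r
  constructor <;>
    simp [Complex.div_re, Complex.div_im, Complex.normSq_conj] <;> ring
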